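/- Let F : F_{2^n} → F_{2^n} be an o-polynomial. Then Σ_{b ∈ F_{2^n}^*} Σ_{v_1, v_2 ∈ F_{2^n}} W_F(b v_1, v_1)·W_F(b v_2, v_2)·W_F(b(v_1+v_2), v_1+v_2) = (2^n − 1)·2^{3n+2}. -/

import Mathlib

open scoped Classical
open Finset

noncomputable instance (n : ℕ) : Fintype (GaloisField 2 n) := Fintype.ofFinite _

/-- The absolute trace from `GF(2^n)` to `GF(2)`. -/
noncomputable def tr (n : ℕ) (x : GaloisField 2 n) : ZMod 2 :=
  Algebra.trace (ZMod 2) (GaloisField 2 n) x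

/-- The Walsh transform of `F` at `(u, v)`. -/
noncomputable def W (n : ℕ) (F : GaloisField 2 n → GaloisField 2 n)
    (u v : GaloisField 2 n) : ℤ :=
  ∑ x : GaloisField 2 n, (-1 : ℤ) ^ (tr n (v * F x) + tr n (u * x)).val

/-- `F` is an o-polynomial: for every nonzero `b` and every `a`, the equation
`F x + b * x = a` has 0 or 2 solutions. -/
def IsOPoly (n : ℕ) (F : GaloisField 2 n → GaloisField 2 n) : Prop :=
  ∀ b : GaloisField 2 n, b ≠ 0 → ∀ a : GaloisField 2 n,
    Nat.card {x : GaloisField 2 n // F x + b * x = a} = 0 ∨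
    Nat.card {x : GaloisField 2 n // F x + b * x = a} = 2

lemma tr_add (n : ℕ) (x y : GaloisField 2 n) : tr n (x + y) = tr n x + tr n y :=
  map_add (Algebra.trace (ZMod 2) (GaloisField 2 n)) x y

lemma neg_one_pow_add (s t : ZMod 2) :
    (-1:ℤ)^(s+t).val = (-1)^s.val * (-1)^t.val := by revert s t; decide

lemma tr_exists (n : ℕ) {c : GaloisField 2 n} (hc : c ≠ 0) :
    ∃ w, tr n (w * c) ≠ 0 := by
  have htr := (traceForm_nondegenerate (ZMod 2) (GaloisField 2 n)).1 c
  simp_rw [Algebra.traceForm_apply] at htr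
  by_contra! hf
  exact hc (htr fun x => by simpa [tr, mul_comm] using hf x)

lemma ortho (n : ℕ) (hn : 0 < n) (c : GaloisField 2 n) :
    ∑ v : GaloisField 2 n, (-1:ℤ)^(tr n (v * c)).val
      = if c = 0 then (2:ℤ)^n else 0 := by
  split_ifs with hc
  · subst hc
    have : Fintype.card (GaloisField 2 n) = 2 ^ n := by
      rw [← Nat.card_eq_fintype_card, GaloisField.card 2 n hn.ne']
    simp [tr, this]
  · obtain ⟨w, hw⟩ := tr_exists n hc
    have hw1 : tr n (w * c) = 1 := by
      have h : ∀ x : ZMod 2, x ≠ 0 → x = 1 := by decide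
      exact h _ hw
    have key : ∑ v : GaloisField 2 n, (-1:ℤ)^(tr n ((v + w) * c)).val
        = ∑ v : GaloisField 2 n, (-1:ℤ)^(tr n (v * c)).val :=
      Fintype.sum_equiv (Equiv.addRight w) _ _ (fun v => rfl)
    have key2 : ∀ v : GaloisField 2 n,
        (-1:ℤ)^(tr n ((v + w) * c)).val = -(-1:ℤ)^(tr n (v * c)).val := by
      intro v
      have : tr n ((v + w) * c) = tr n (v * c) + tr n (w * c) := by
        rw [add_mul]; exact map_add _ _ _
      rw [this, neg_one_pow_add, hw1]
      norm_num [ZMod.val_one]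
    rw [Finset.sum_congr rfl (fun v _ => key2 v), Finset.sum_neg_distrib] at key
    linarith

lemma pairsum (n : ℕ) (hn : 0 < n) (a c : GaloisField 2 n) :
    ∑ v : GaloisField 2 n, (-1:ℤ)^(tr n (v * a)).val * (-1:ℤ)^(tr n (v * c)).val
      = if a = c then (2:ℤ)^n else 0 := by
  have h1 : ∀ v : GaloisField 2 n,
      (-1:ℤ)^(tr n (v * a)).val * (-1:ℤ)^(tr n (v * c)).val
        = (-1:ℤ)^(tr n (v * (a + c))).val := by
    intro v
    rw [mul_add, tr_add, neg_one_pow_add]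
  rw [Finset.sum_congr rfl (fun v _ => h1 v), ortho n hn]
  have : a + c = 0 ↔ a = c := by
    rw [add_eq_zero_iff_eq_neg, CharTwo.neg_eq]
  simp only [this]

theorem o_polynomial_total_triple_walsh_sum (n : ℕ) (hn : 0 < n)
    (F : GaloisField 2 n → GaloisField 2 n) (hF : IsOPoly n F) :
    ∑ b ∈ univ.filter (fun b : GaloisField 2 n => b ≠ 0),
        ∑ v₁ : GaloisField 2 n, ∑ v₂ : GaloisField 2 n,
          W n F (b * v₁) v₁ * W n F (b * v₂) v₂ * W n F (b * (v₁ + v₂)) (v₁ + v₂) =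
      ((2 : ℤ) ^ n - 1) * 2 ^ (3 * n + 2) := by
  have hcard : Fintype.card (GaloisField 2 n) = 2 ^ n := by
    rw [← Nat.card_eq_fintype_card, GaloisField.card 2 n hn.ne']
  have main : ∀ b : GaloisField 2 n, b ≠ 0 →
      (∑ v₁ : GaloisField 2 n, ∑ v₂ : GaloisField 2 n,
        W n F (b * v₁) v₁ * W n F (b * v₂) v₂ * W n F (b * (v₁ + v₂)) (v₁ + v₂))
      = 2 ^ (3 * n + 2) := by
    intro b hb
    set G : GaloisField 2 n → GaloisField 2 n := fun x => F x + b * x with hG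
    set e : GaloisField 2 n → GaloisField 2 n → ℤ :=
      fun v u => (-1:ℤ)^(tr n (v * u)).val with he
    -- each W rewritten
    have hW : ∀ v : GaloisField 2 n, W n F (b * v) v = ∑ x, e v (G x) := by
      intro v
      unfold W
      refine Finset.sum_congr rfl fun x _ => ?_
      have h2 : tr n (v * F x) + tr n (b * v * x) = tr n (v * G x) := by
        simp only [hG]
        rw [← tr_add]
        congr 1
        ring
      simp only [he]
      rw [h2]
    have esplit : ∀ v₁ v₂ u : GaloisField 2 n,
        e (v₁ + v₂) u = e v₁ u * e v₂ u := by
      intro v₁ v₂ u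
      simp only [he]
      rw [add_mul, tr_add, neg_one_pow_add]
    -- count lemma
    have count : ∀ z : GaloisField 2 n,
        (univ.filter (fun x => G x = G z)).card = 2 := by
      intro z
      have h := hF b hb (G z)
      have hcard2 : Nat.card {x : GaloisField 2 n // F x + b * x = G z}
          = (univ.filter (fun x => G x = G z)).card := by
        rw [Nat.card_eq_fintype_card, Fintype.card_subtype]
      rcases h with h | h
      · exfalso
        have : Nat.card {x : GaloisField 2 n // F x + b * x = G z} ≠ 0 := by
          have : Nonempty {x : GaloisField 2 n // F x + b * x = G z} := ⟨⟨z, rfl⟩⟩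
          exact Nat.card_pos.ne'
        exact this h
      · rw [← hcard2, h]
    -- the per-z factor
    have factor : ∀ z : GaloisField 2 n,
        (∑ v : GaloisField 2 n, (∑ x, e v (G x)) * e v (G z)) = 2 ^ (n + 1) := by
      intro z
      have : ∀ v : GaloisField 2 n,
          (∑ x, e v (G x)) * e v (G z) = ∑ x, e v (G x) * e v (G z) :=
        fun v => Finset.sum_mul _ _ _
      rw [Finset.sum_congr rfl (fun v _ => this v), Finset.sum_comm]
      calc ∑ x : GaloisField 2 n, ∑ v : GaloisField 2 n, e v (G x) * e v (G z)
          = ∑ x : GaloisField 2 n, if G x = G z then (2:ℤ)^n else 0 := by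
            refine Finset.sum_congr rfl fun x _ => ?_
            exact pairsum n hn (G x) (G z)
        _ = ∑ x ∈ univ.filter (fun x => G x = G z), (2:ℤ)^n := by
            rw [Finset.sum_filter]
        _ = 2 ^ (n + 1) := by
            rw [Finset.sum_const, count z]
            ring
    calc ∑ v₁ : GaloisField 2 n, ∑ v₂ : GaloisField 2 n,
          W n F (b * v₁) v₁ * W n F (b * v₂) v₂ * W n F (b * (v₁ + v₂)) (v₁ + v₂)
        = ∑ v₁ : GaloisField 2 n, ∑ v₂ : GaloisField 2 n, ∑ z : GaloisField 2 n,
            ((∑ x, e v₁ (G x)) * e v₁ (G z)) * ((∑ y, e v₂ (G y)) * e v₂ (G z)) := by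
          refine Finset.sum_congr rfl fun v₁ _ => Finset.sum_congr rfl fun v₂ _ => ?_
          rw [hW v₁, hW v₂, hW (v₁ + v₂)]
          rw [Finset.sum_congr rfl (fun z _ => esplit v₁ v₂ (G z))]
          rw [Finset.mul_sum]
          refine Finset.sum_congr rfl fun z _ => ?_
          ring
      _ = ∑ z : GaloisField 2 n, ∑ v₁ : GaloisField 2 n, ∑ v₂ : GaloisField 2 n,
            ((∑ x, e v₁ (G x)) * e v₁ (G z)) * ((∑ y, e v₂ (G y)) * e v₂ (G z)) := by
          rw [Finset.sum_congr rfl fun v₁ _ => Finset.sum_comm, Finset.sum_comm]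
      _ = ∑ z : GaloisField 2 n,
            (∑ v₁ : GaloisField 2 n, (∑ x, e v₁ (G x)) * e v₁ (G z)) *
            (∑ v₂ : GaloisField 2 n, (∑ y, e v₂ (G y)) * e v₂ (G z)) := by
          refine Finset.sum_congr rfl fun z _ => ?_
          rw [Finset.sum_mul_sum]
      _ = ∑ z : GaloisField 2 n, (2:ℤ) ^ (n + 1) * 2 ^ (n + 1) := by
          refine Finset.sum_congr rfl fun z _ => ?_
          rw [factor z]
      _ = 2 ^ (3 * n + 2) := by
          rw [Finset.sum_const, Finset.card_univ, hcard]
          ring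
  rw [Finset.sum_congr rfl (fun b hb => main b (by simpa using hb))]
  rw [Finset.sum_const]
  have hfc : (univ.filter (fun b : GaloisField 2 n => b ≠ 0)).card = 2 ^ n - 1 := by
    rw [Finset.filter_ne', Finset.card_erase_of_mem (Finset.mem_univ 0),
      Finset.card_univ, hcard]
  rw [hfc]
  have h1 : (1:ℕ) ≤ 2 ^ n := Nat.one_le_two_pow
  rw [nsmul_eq_mul, Nat.cast_sub h1]
  push_cast
  ring
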